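/- The endofunctor M ↦ N(Δ/M) on simplicial sets preserves colimits; equivalently, it is isomorphic to the left Kan extension along the Yoneda embedding of its restriction to the representables Δⁿ. -/

import Mathlib

open CategoryTheory Opposite

noncomputable def elementsNerveFunctor : SSet.{0} ⥤ SSet.{0} where
  obj M := nerve (M.Elementsᵒᵖ)
  map {M M'} u := nerveFunctor.{0, 0}.map
    (show Cat.of (M.Elementsᵒᵖ) ⟶ Cat.of (M'.Elementsᵒᵖ) from
      (CategoryOfElements.map u).op.toCatHom)
  map_id M := by
    change nerveFunctor.{0, 0}.map (𝟙 (Cat.of (M.Elementsᵒᵖ))) =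
      𝟙 (nerveFunctor.{0, 0}.obj (Cat.of (M.Elementsᵒᵖ)))
    rw [CategoryTheory.Functor.map_id]
  map_comp {M M' M''} u v := by
    change nerveFunctor.{0, 0}.map
      ((show Cat.of (M.Elementsᵒᵖ) ⟶ Cat.of (M'.Elementsᵒᵖ) from
        (CategoryOfElements.map u).op.toCatHom) ≫
       (show Cat.of (M'.Elementsᵒᵖ) ⟶ Cat.of (M''.Elementsᵒᵖ) from
        (CategoryOfElements.map v).op.toCatHom)) = _
    rw [CategoryTheory.Functor.map_comp]
    rfl

namespace ElementsNerveAux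

open CategoryTheory Limits

/-- chains of length `k` in `(Δᵒᵖ)ᵒᵖ`. -/
abbrev Chain (k : ℕ) : Type := ComposableArrows (SimplexCategoryᵒᵖᵒᵖ) k

/-- the last object of a chain, as an object of `Δᵒᵖ`. -/
def chainLast {k : ℕ} (c : Chain k) : SimplexCategoryᵒᵖ := (c.obj (Fin.last k)).unop

/-- the "sigma" functor. -/
def Q (k : ℕ) : SSet.{0} ⥤ Type where
  obj M := Σ c : Chain k, M.obj (chainLast c)
  map u := TypeCat.ofHom fun p => ⟨p.1, u.app _ p.2⟩

/-- the family of evaluations. -/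
def evFam (k : ℕ) : SSet.{0} ⥤ (Discrete (Chain k) ⥤ Type) where
  obj M := Discrete.functor fun c => M.obj (chainLast c)
  map u := Discrete.natTrans fun c => u.app _
  map_id M := by ext ⟨c⟩; rfl
  map_comp u v := by ext ⟨c⟩; rfl

instance evalPC (X : SimplexCategoryᵒᵖ) :
    PreservesColimits ((evaluation SimplexCategoryᵒᵖ Type).obj X) :=
  { preservesColimitsOfShape := inferInstance }

instance (k : ℕ) : PreservesColimits (evFam k) :=
  preservesColimits_of_evaluation _ fun c => evalPC (chainLast c.as)

/-- comparison with the pointwise coproduct. -/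
noncomputable def QIso (k : ℕ) : evFam k ⋙ colim ≅ Q k :=
  NatIso.ofComponents
    (fun M => colimit.isoColimitCocone
      (Types.coproductColimitCocone (fun c : Chain k => M.obj (chainLast c))))
    (fun {M M'} u => by
      apply colimit.hom_ext
      rintro ⟨c⟩
      rw [← Category.assoc]
      erw [ι_colimMap]
      erw [Category.assoc, colimit.isoColimitCocone_ι_hom]
      erw [← Category.assoc, colimit.isoColimitCocone_ι_hom]
      ext x
      rfl)

noncomputable instance (k : ℕ) : PreservesColimits (Q k) :=
  preservesColimits_of_natIso (QIso k)

lemma elements_eqToHom_val {C : Type*} [Category C] {G : C ⥤ Type w}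
    {p q : G.Elements} (h : p = q) :
    (eqToHom h).val = eqToHom (congrArg Sigma.fst h) := by
  subst h; rfl

lemma homOfLE_last_last {k : ℕ} :
    homOfLE (Fin.le_last (Fin.last k)) = 𝟙 (Fin.last k) := rfl

/-- reconstruct a chain in the category of elements from a chain in `Δ` together
with an element over its last object. -/
def back (M : SSet.{0}) {k : ℕ} (c : Chain k) (x : M.obj (chainLast c)) :
    ComposableArrows (M.Elementsᵒᵖ) k where
  obj i := op ⟨(c.obj i).unop, M.map (c.map (homOfLE (Fin.le_last i))).unop x⟩
  map {i j} f := Quiver.Hom.op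
    (⟨(c.map f).unop, by
      change M.map _ (M.map _ x) = M.map _ x
      erw [← FunctorToTypes.map_comp_apply, ← unop_comp, ← c.map_comp]
      rw [show f ≫ homOfLE (Fin.le_last j) = homOfLE (Fin.le_last i) from
        Subsingleton.elim _ _]⟩)
  map_id i := by
    apply Quiver.Hom.unop_inj
    apply CategoryOfElements.ext
    simp
    rfl
  map_comp f g := by
    apply Quiver.Hom.unop_inj
    apply CategoryOfElements.ext
    simp
    rfl

/-- the comparison map. -/
def toQ (X : SimplexCategoryᵒᵖ) :
    elementsNerveFunctor ⋙ (evaluation SimplexCategoryᵒᵖ Type).obj X ⟶ Q X.unop.len where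
  app M := TypeCat.ofHom fun F => ⟨F ⋙ (CategoryOfElements.π M).op, (F.obj (Fin.last _)).unop.2⟩
  naturality _ _ _ := rfl

lemma toQ_back {X : SimplexCategoryᵒᵖ} {M : SSet.{0}} (c : Chain X.unop.len)
    (x : M.obj (chainLast c)) :
    (toQ X).app M (back M c x) = (⟨c, x⟩ : Σ c : Chain X.unop.len, M.obj (chainLast c)) := by
  have hc : back M c x ⋙ (CategoryOfElements.π M).op = c := by
    refine CategoryTheory.Functor.ext (fun i => rfl) (fun i j f => by simp [back]; erw [eqToHom_refl, eqToHom_refl, Category.id_comp, Category.comp_id]; rfl)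
  refine Sigma.ext hc (heq_of_eq ?_)
  show M.map (c.map (homOfLE (Fin.le_last (Fin.last _)))).unop x = x
  rw [homOfLE_last_last, c.map_id]
  simp
  rfl

lemma back_toQ {X : SimplexCategoryᵒᵖ} {M : SSet.{0}}
    (F : (elementsNerveFunctor ⋙ (evaluation SimplexCategoryᵒᵖ Type).obj X).obj M) :
    back M (F ⋙ (CategoryOfElements.π M).op) ((F.obj (Fin.last _)).unop.2) = F := by
  refine CategoryTheory.Functor.ext (fun i => ?_) (fun i j f => ?_)
  · exact congrArg (fun y => op (⟨(F.obj i).unop.1, y⟩ : M.Elements))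
      (F.map (homOfLE (Fin.le_last i))).unop.2
  · apply Quiver.Hom.unop_inj
    apply CategoryOfElements.ext
    simp only [unop_comp, eqToHom_unop, CategoryOfElements.comp_val,
      elements_eqToHom_val]
    erw [eqToHom_unop, elements_eqToHom_val]
    generalize_proofs h1 h2
    rw [show h1 = rfl from rfl, show h2 = rfl from rfl]
    simp
    erw [eqToHom_refl, eqToHom_refl, Category.id_comp, Category.comp_id]
    rfl

lemma toQ_bij (X : SimplexCategoryᵒᵖ) (M : SSet.{0}) :
    Function.Bijective ((toQ X).app M) := by
  rw [Function.bijective_iff_has_inverse]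
  exact ⟨fun (p : Σ c : Chain X.unop.len, M.obj (chainLast c)) => back M p.1 p.2, fun F => back_toQ F, fun ⟨c, x⟩ => toQ_back c x⟩

noncomputable instance (X : SimplexCategoryᵒᵖ) : IsIso (toQ X) := by
  have : ∀ M, IsIso ((toQ X).app M) :=
    fun M => (isIso_iff_bijective _).2 (toQ_bij X M)
  apply NatIso.isIso_of_isIso_app

end ElementsNerveAux

theorem elementsNerve_preservesColimits :
    Nonempty (Limits.PreservesColimits elementsNerveFunctor) := by
  refine ⟨Limits.preservesColimits_of_evaluation _ fun X => ?_⟩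
  exact Limits.preservesColimits_of_natIso (asIso (ElementsNerveAux.toQ X)).symm
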